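/- Let Φ be the non-selective measurement channel associated with a complete family of pairwise orthogonal projections {P_a} on ℂ^n, let ρ be a quantum state on ℂ^n, and let d ≥ 1. Then Tr(√(ρ ⊗ E₀₀) · √(ρ ⊗ (1_d/d))) = 1/√d and Tr(√(ρ ⊗ E₀₀) · √(Φ(ρ) ⊗ (1_d/d))) = Tr(√ρ · √Φ(ρ))/√d; consequently the change in squared-Hellinger-distance conditional information satisfies (2 − 2·Tr(√(ρ⊗E₀₀)·√(Φ(ρ)⊗1_d/d))) − (2 − 2·Tr(√(ρ⊗E₀₀)·√(ρ⊗1_d/d))) = (1/√d) · (2 − 2·Tr(√ρ·√Φ(ρ))). -/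

import Mathlib

open Matrix Kronecker
open scoped ComplexOrder

noncomputable section

variable {n : Type*} [Fintype n] [DecidableEq n]

/-- `|X| = (X† X)^{1/2}`, the positive semidefinite absolute value of a matrix. -/
def matAbs (X : Matrix n n ℂ) : Matrix n n ℂ :=
  (Matrix.posSemidef_conjTranspose_mul_self X).1.eigenvectorUnitary.1 *
    diagonal ((↑) ∘ (√·) ∘ (Matrix.posSemidef_conjTranspose_mul_self X).1.eigenvalues) *
    (star (Matrix.posSemidef_conjTranspose_mul_self X).1.eigenvectorUnitary : Matrix n n ℂ)

/-- `Tr |X|^p`, with the `p`-th power taken through the functional calculus. -/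
def traceAbsPow (p : ℝ) (X : Matrix n n ℂ) : ℝ :=
  (Matrix.trace (cfc (fun x : ℝ => x ^ p) (matAbs X))).re

/-- The Schatten `p`-norm `‖X‖_p = (Tr |X|^p)^(1/p)`. -/
def schatten (p : ℝ) (X : Matrix n n ℂ) : ℝ :=
  (traceAbsPow p X) ^ (1 / p)

/-- Matrix square root via the functional calculus (agrees with the positive semidefinite
square root on positive semidefinite matrices). -/
def msqrt (X : Matrix n n ℂ) : Matrix n n ℂ := cfc Real.sqrt X

/-- Matrix natural logarithm via the functional calculus. -/
def mlog (X : Matrix n n ℂ) : Matrix n n ℂ := cfc Real.log X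

/-- Von Neumann entropy `S(ρ) = -Tr(ρ log ρ)`. -/
def vnEntropy (ρ : Matrix n n ℂ) : ℝ := -(Matrix.trace (ρ * mlog ρ)).re

/-- Relative entropy `S(ρ‖σ) = Tr(ρ log ρ) - Tr(ρ log σ)`. -/
def relEnt (ρ σ : Matrix n n ℂ) : ℝ :=
  (Matrix.trace (ρ * mlog ρ)).re - (Matrix.trace (ρ * mlog σ)).re

/-- Uhlmann fidelity `F(ρ,σ) = (Tr|√σ √ρ|)²`. -/
def fidelity (ρ σ : Matrix n n ℂ) : ℝ :=
  ((Matrix.trace (matAbs (msqrt σ * msqrt ρ))).re) ^ 2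

/-- Partial trace over the second factor. -/
def ptraceE {S E : Type*} [Fintype E] (Ω : Matrix (S × E) (S × E) ℂ) : Matrix S S ℂ :=
  Matrix.of fun s s' => ∑ e, Ω (s, e) (s', e)

/-- Partial trace over the first factor. -/
def ptraceS {S E : Type*} [Fintype S] (Ω : Matrix (S × E) (S × E) ℂ) : Matrix E E ℂ :=
  Matrix.of fun e e' => ∑ s, Ω (s, e) (s, e')

set_option linter.unusedSectionVars false

section
open scoped MatrixOrder

def Matrix.PosSemidef.sqrt {A : Matrix n n ℂ} (_hA : A.PosSemidef) : Matrix n n ℂ := CFC.sqrt A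

lemma Matrix.PosSemidef.posSemidef_sqrt {A : Matrix n n ℂ} (hA : A.PosSemidef) :
    hA.sqrt.PosSemidef :=
  (CFC.sqrt_nonneg A).posSemidef

lemma Matrix.PosSemidef.sqrt_mul_self {A : Matrix n n ℂ} (hA : A.PosSemidef) :
    hA.sqrt * hA.sqrt = A :=
  CFC.sqrt_mul_sqrt_self A hA.nonneg

lemma Matrix.PosSemidef.eq_sqrt_of_sq_eq {A B : Matrix n n ℂ} (hA : A.PosSemidef)
    (hB : B.PosSemidef) (h : A ^ 2 = B) : A = hB.sqrt := by
  rw [Matrix.PosSemidef.sqrt, ← h, CFC.sqrt_sq A hA.nonneg]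

lemma Matrix.posSemidef_iff_eq_transpose_mul_self {A : Matrix n n ℂ} :
    A.PosSemidef ↔ ∃ B : Matrix n n ℂ, A = Bᴴ * B := by
  refine ⟨fun hA => ⟨hA.sqrt, ?_⟩, fun ⟨B, hB⟩ => hB ▸ Matrix.posSemidef_conjTranspose_mul_self B⟩
  rw [hA.posSemidef_sqrt.1.eq, hA.sqrt_mul_self]

lemma msqrt_eq {A : Matrix n n ℂ} (hA : A.PosSemidef) : msqrt A = hA.sqrt := by
  rw [Matrix.PosSemidef.sqrt, CFC.sqrt_eq_real_sqrt A hA.nonneg, cfcₙ_eq_cfc]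
  rfl

end

lemma kron_conjTranspose {m p : Type*} (A : Matrix m m ℂ) (B : Matrix p p ℂ) :
    (A ⊗ₖ B)ᴴ = Aᴴ ⊗ₖ Bᴴ := by
  ext ⟨i, j⟩ ⟨k, l⟩
  simp [Matrix.conjTranspose_apply, Matrix.kroneckerMap_apply]

lemma posSemidef_kron {m p : Type*} [Fintype m] [DecidableEq m] [Fintype p] [DecidableEq p]
    {A : Matrix m m ℂ} {B : Matrix p p ℂ} (hA : A.PosSemidef) (hB : B.PosSemidef) :
    (A ⊗ₖ B).PosSemidef := by
  obtain ⟨C, rfl⟩ := Matrix.posSemidef_iff_eq_transpose_mul_self.mp hA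
  obtain ⟨D, rfl⟩ := Matrix.posSemidef_iff_eq_transpose_mul_self.mp hB
  rw [Matrix.mul_kronecker_mul, ← kron_conjTranspose]
  exact Matrix.posSemidef_conjTranspose_mul_self _

lemma msqrt_kron {m p : Type*} [Fintype m] [DecidableEq m] [Fintype p] [DecidableEq p]
    {A : Matrix m m ℂ} {B : Matrix p p ℂ} (hA : A.PosSemidef) (hB : B.PosSemidef) :
    msqrt (A ⊗ₖ B) = msqrt A ⊗ₖ msqrt B := by
  rw [msqrt_eq hA, msqrt_eq hB, msqrt_eq (posSemidef_kron hA hB)]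
  refine ((posSemidef_kron hA.posSemidef_sqrt hB.posSemidef_sqrt).eq_sqrt_of_sq_eq _ ?_).symm
  rw [pow_two, ← Matrix.mul_kronecker_mul, hA.sqrt_mul_self, hB.sqrt_mul_self]

lemma proj_posSemidef {A : Matrix n n ℂ} (hh : Aᴴ = A) (hi : A * A = A) : A.PosSemidef := by
  rw [Matrix.posSemidef_iff_eq_transpose_mul_self]
  exact ⟨A, by rw [hh, hi]⟩

lemma msqrt_proj {A : Matrix n n ℂ} (hh : Aᴴ = A) (hi : A * A = A) : msqrt A = A := by
  have hA := proj_posSemidef hh hi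
  rw [msqrt_eq hA]
  exact (hA.eq_sqrt_of_sq_eq hA (by rw [pow_two, hi])).symm

lemma smul_one_posSemidef {c : ℝ} (hc : 0 ≤ c) :
    Matrix.PosSemidef ((c : ℂ) • (1 : Matrix n n ℂ)) := by
  rw [Matrix.posSemidef_iff_eq_transpose_mul_self]
  refine ⟨(Real.sqrt c : ℂ) • 1, ?_⟩
  rw [Matrix.conjTranspose_smul, Matrix.conjTranspose_one, smul_mul_smul_comm, one_mul]
  congr 1
  rw [Complex.star_def, Complex.conj_ofReal, ← Complex.ofReal_mul, Real.mul_self_sqrt hc]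

lemma msqrt_smul_one {c : ℝ} (hc : 0 ≤ c) :
    msqrt ((c : ℂ) • (1 : Matrix n n ℂ)) = (Real.sqrt c : ℂ) • 1 := by
  rw [msqrt_eq (smul_one_posSemidef hc)]
  refine ((smul_one_posSemidef (Real.sqrt_nonneg c)).eq_sqrt_of_sq_eq _ ?_).symm
  rw [smul_pow, one_pow, sq, ← Complex.ofReal_mul, Real.mul_self_sqrt hc]

lemma posSemidef_sum {ι : Type*} (s : Finset ι) (f : ι → Matrix n n ℂ)
    (h : ∀ i ∈ s, (f i).PosSemidef) : (∑ i ∈ s, f i).PosSemidef := by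
  induction s using Finset.cons_induction with
  | empty => simpa using Matrix.PosSemidef.zero
  | cons i s hi ih =>
    rw [Finset.sum_cons]
    exact (h i (by simp)).add (ih fun j hj => h j (by simp [hj]))

lemma trace_key {m : Type*} [Fintype m] [DecidableEq m] (d : ℕ) (hd : 1 ≤ d)
    {ρ σ : Matrix m m ℂ} (hρ : ρ.PosSemidef) (hσ : σ.PosSemidef) :
    Matrix.trace (msqrt (ρ ⊗ₖ Matrix.single (⟨0, hd⟩ : Fin d) ⟨0, hd⟩ (1 : ℂ))
      * msqrt (σ ⊗ₖ ((d : ℂ)⁻¹ • (1 : Matrix (Fin d) (Fin d) ℂ))))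
    = Matrix.trace (msqrt ρ * msqrt σ) * ((Real.sqrt d)⁻¹ : ℂ) := by
  set i : Fin d := ⟨0, hd⟩
  have hEh : (Matrix.single i i (1 : ℂ))ᴴ = Matrix.single i i (1 : ℂ) := by
    ext a b
    simp [Matrix.conjTranspose_apply, Matrix.single, and_comm]
  have hEi : Matrix.single i i (1 : ℂ) * Matrix.single i i (1 : ℂ)
      = Matrix.single i i (1 : ℂ) := by
    rw [Matrix.single_mul_single_same, one_mul]
  have hcast : ((d : ℂ)⁻¹ • (1 : Matrix (Fin d) (Fin d) ℂ))
      = ((((d : ℝ)⁻¹ : ℝ) : ℂ) • (1 : Matrix (Fin d) (Fin d) ℂ)) := by push_cast; rfl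
  have hinv : (0 : ℝ) ≤ (d : ℝ)⁻¹ := by positivity
  rw [hcast, msqrt_kron hρ (proj_posSemidef hEh hEi), msqrt_kron hσ (smul_one_posSemidef hinv),
    msqrt_proj hEh hEi, msqrt_smul_one hinv, Real.sqrt_inv,
    ← Matrix.mul_kronecker_mul, Matrix.trace_kronecker, mul_smul_comm, mul_one,
    Matrix.trace_smul, Matrix.trace_single_eq_same, smul_eq_mul, mul_one, Complex.ofReal_inv]


/-- Hellinger affinities with the environment and the change in squared-Hellinger-distance
conditional information: `Δ = (1/√d)·d²_He(ρ, Φ(ρ))`. -/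
theorem hellinger_conditional_information
    {n ι : Type*} [Fintype n] [DecidableEq n] [Fintype ι]
    (P : ι → Matrix n n ℂ)
    (hproj : ∀ a, P a * P a = P a)
    (hherm : ∀ a, (P a)ᴴ = P a)
    (horth : ∀ a b, a ≠ b → P a * P b = 0)
    (hsum : ∑ a, P a = 1)
    (ρ : Matrix n n ℂ) (hρ : ρ.PosSemidef) (htr : ρ.trace = 1)
    (d : ℕ) (hd : 1 ≤ d) :
    (Matrix.trace (msqrt (ρ ⊗ₖ Matrix.single (⟨0, hd⟩ : Fin d) ⟨0, hd⟩ (1 : ℂ))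
        * msqrt (ρ ⊗ₖ ((d : ℂ)⁻¹ • (1 : Matrix (Fin d) (Fin d) ℂ))))).re
      = 1 / Real.sqrt d ∧
    (Matrix.trace (msqrt (ρ ⊗ₖ Matrix.single (⟨0, hd⟩ : Fin d) ⟨0, hd⟩ (1 : ℂ))
        * msqrt ((∑ a, P a * ρ * P a) ⊗ₖ ((d : ℂ)⁻¹ • (1 : Matrix (Fin d) (Fin d) ℂ))))).re
      = (Matrix.trace (msqrt ρ * msqrt (∑ a, P a * ρ * P a))).re / Real.sqrt d ∧
    (2 - 2 * (Matrix.trace (msqrt (ρ ⊗ₖ Matrix.single (⟨0, hd⟩ : Fin d) ⟨0, hd⟩ (1 : ℂ))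
        * msqrt ((∑ a, P a * ρ * P a) ⊗ₖ ((d : ℂ)⁻¹ • (1 : Matrix (Fin d) (Fin d) ℂ))))).re)
      - (2 - 2 * (Matrix.trace (msqrt (ρ ⊗ₖ Matrix.single (⟨0, hd⟩ : Fin d) ⟨0, hd⟩ (1 : ℂ))
        * msqrt (ρ ⊗ₖ ((d : ℂ)⁻¹ • (1 : Matrix (Fin d) (Fin d) ℂ))))).re)
      = (1 / Real.sqrt d)
        * (2 - 2 * (Matrix.trace (msqrt ρ * msqrt (∑ a, P a * ρ * P a))).re) := by
  
  have hσ : (∑ a, P a * ρ * P a).PosSemidef := by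
    refine posSemidef_sum _ _ fun a _ => ?_
    have := hρ.mul_mul_conjTranspose_same (P a)
    rwa [hherm a] at this
  have h1 : (Matrix.trace (msqrt (ρ ⊗ₖ Matrix.single (⟨0, hd⟩ : Fin d) ⟨0, hd⟩ (1 : ℂ))
        * msqrt (ρ ⊗ₖ ((d : ℂ)⁻¹ • (1 : Matrix (Fin d) (Fin d) ℂ))))).re
      = 1 / Real.sqrt d := by
    rw [trace_key d hd hρ hρ, msqrt_eq hρ, hρ.sqrt_mul_self, htr, one_mul, ← Complex.ofReal_inv,
      Complex.ofReal_re, one_div]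
  have h2 : (Matrix.trace (msqrt (ρ ⊗ₖ Matrix.single (⟨0, hd⟩ : Fin d) ⟨0, hd⟩ (1 : ℂ))
        * msqrt ((∑ a, P a * ρ * P a) ⊗ₖ ((d : ℂ)⁻¹ • (1 : Matrix (Fin d) (Fin d) ℂ))))).re
      = (Matrix.trace (msqrt ρ * msqrt (∑ a, P a * ρ * P a))).re / Real.sqrt d := by
    rw [trace_key d hd hρ hσ, ← Complex.ofReal_inv, Complex.mul_re, Complex.ofReal_re,
      Complex.ofReal_im, mul_zero, sub_zero, div_eq_mul_inv]
  refine ⟨h1, h2, ?_⟩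
  rw [h1, h2]
  simp only [div_eq_mul_inv, one_mul]
  ring
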